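/- Let a, c > 0 and let κ, κ̃ ∈ (0, 2π) be such that either both κ, κ̃ ∈ (0, π) or both κ, κ̃ ∈ (π, 2π). If tan(κ̃/2) = √(a/c) · tan(κ/2), then κ̃ · √(min(a,c)) ≤ κ · √(max(a,c)); equivalently, π/κ̃ ≥ √( min(a,c) / max(a,c) ) · (π/κ). -/

import Mathlib

open Real

/-- Key concavity-type lemma: for `0 ≤ t ≤ 1` and `0 ≤ x`,
`t * arctan x ≤ arctan (t * x)`. -/
lemma arctan_mul_ge (t x : ℝ) (ht0 : 0 ≤ t) (ht1 : t ≤ 1) (hx : 0 ≤ x) :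
    t * Real.arctan x ≤ Real.arctan (t * x) := by
  set f : ℝ → ℝ := fun y => Real.arctan (t * y) - t * Real.arctan y with hf
  have hd : ∀ y : ℝ, HasDerivAt f (1 / (1 + (t * y) ^ 2) * t - t * (1 / (1 + y ^ 2))) y := by
    intro y
    have h1 : HasDerivAt (fun y : ℝ => Real.arctan (t * y)) (1 / (1 + (t * y) ^ 2) * t) y := by
      have := (Real.hasDerivAt_arctan (t * y)).comp y ((hasDerivAt_id y).const_mul t)
      simpa [mul_comm, Function.comp_def] using this
    have h2 : HasDerivAt (fun y : ℝ => t * Real.arctan y) (t * (1 / (1 + y ^ 2))) y :=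
      (Real.hasDerivAt_arctan y).const_mul t
    exact h1.sub h2
  have hmono : Monotone f := by
    apply monotone_of_deriv_nonneg
    · exact fun y => (hd y).differentiableAt
    · intro y
      rw [(hd y).deriv]
      have hden1 : (0:ℝ) < 1 + (t * y) ^ 2 := by positivity
      have hden2 : (0:ℝ) < 1 + y ^ 2 := by positivity
      have hsq : (t * y) ^ 2 ≤ y ^ 2 := by
        have htt : t ^ 2 ≤ 1 := by nlinarith
        calc (t * y) ^ 2 = t ^ 2 * y ^ 2 := by ring
          _ ≤ 1 * y ^ 2 := mul_le_mul_of_nonneg_right htt (sq_nonneg y)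
          _ = y ^ 2 := one_mul _
      have h1 : 1 / (1 + y ^ 2) ≤ 1 / (1 + (t * y) ^ 2) :=
        one_div_le_one_div_of_le hden1 (by linarith)
      nlinarith [mul_le_mul_of_nonneg_left h1 ht0]
  have h0 : f 0 = 0 := by simp [hf]
  have := hmono hx
  rw [h0] at this
  simpa [hf] using this

/-- For `M ≥ 1` and `0 ≤ y`, `arctan (M * y) ≤ M * arctan y`. -/
lemma arctan_mul_le (M y : ℝ) (hM : 1 ≤ M) (hy : 0 ≤ y) :
    Real.arctan (M * y) ≤ M * Real.arctan y := by
  have hM0 : 0 < M := lt_of_lt_of_le one_pos hM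
  have key := arctan_mul_ge (1 / M) (M * y) (by positivity)
    ((div_le_one hM0).mpr hM) (by positivity)
  have hrw : 1 / M * (M * y) = y := by field_simp
  rw [hrw] at key
  calc Real.arctan (M * y) = M * (1 / M * Real.arctan (M * y)) := by field_simp
    _ ≤ M * Real.arctan y := mul_le_mul_of_nonneg_left key hM0.le

/-- Let `a, c > 0` and `κ, κ̃ ∈ (0, 2π)` with either both in `(0, π)` or
both in `(π, 2π)`. If `tan(κ̃/2) = √(a/c) · tan(κ/2)`, then
`κ̃ √(min(a,c)) ≤ κ √(max(a,c))`. -/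
theorem stmt_11 (a c κ κ' : ℝ) (ha : 0 < a) (hc : 0 < c)
    (hcase : (0 < κ ∧ κ < Real.pi ∧ 0 < κ' ∧ κ' < Real.pi) ∨
      (Real.pi < κ ∧ κ < 2 * Real.pi ∧ Real.pi < κ' ∧ κ' < 2 * Real.pi))
    (htan : Real.tan (κ' / 2) = Real.sqrt (a / c) * Real.tan (κ / 2)) :
    κ' * Real.sqrt (min a c) ≤ κ * Real.sqrt (max a c) := by
  have hmin : 0 < Real.sqrt (min a c) := Real.sqrt_pos.mpr (lt_min ha hc)
  have hmax : 0 < Real.sqrt (max a c) := Real.sqrt_pos.mpr (lt_max_of_lt_left ha)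
  set M : ℝ := Real.sqrt (max a c) / Real.sqrt (min a c) with hMdef
  set m : ℝ := Real.sqrt (min a c) / Real.sqrt (max a c) with hmdef
  have hminmax : Real.sqrt (min a c) ≤ Real.sqrt (max a c) :=
    Real.sqrt_le_sqrt min_le_max
  have hM1 : 1 ≤ M := (one_le_div hmin).mpr hminmax
  have hm1 : m ≤ 1 := (div_le_one hmax).mpr hminmax
  have hm0 : 0 < m := by positivity
  have hmM : m * M = 1 := by rw [hmdef, hMdef]; field_simp
  set r : ℝ := Real.sqrt (a / c) with hrdef
  have hr : r = Real.sqrt a / Real.sqrt c := by rw [hrdef, Real.sqrt_div ha.le]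
  have hrm : m ≤ r ∧ r ≤ M := by
    rcases le_total a c with h | h
    · have h1 : min a c = a := min_eq_left h
      have h2 : max a c = c := max_eq_right h
      have heq : r = m := by rw [hr, hmdef, h1, h2]
      refine ⟨heq.ge, ?_⟩
      rw [heq]; exact hm1.trans hM1
    · have h1 : min a c = c := min_eq_right h
      have h2 : max a c = a := max_eq_left h
      have heq : r = M := by rw [hr, hMdef, h1, h2]
      refine ⟨?_, heq.le⟩
      rw [heq]; exact hm1.trans hM1
  have hpi := Real.pi_pos
  have hMs : M * Real.sqrt (min a c) = Real.sqrt (max a c) := by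
    rw [hMdef]; field_simp
  clear_value M m r
  suffices hk : κ' ≤ κ * M by
    have h2 := mul_le_mul_of_nonneg_right hk hmin.le
    have h3 : κ * M * Real.sqrt (min a c) = κ * Real.sqrt (max a c) := by
      rw [mul_assoc, hMs]
    linarith [h3 ▸ h2]
  rcases hcase with ⟨hκ0, hκπ, hκ'0, hκ'π⟩ | ⟨hκπ, hκ2, hκ'π, hκ'2⟩
  · -- both in (0, π)
    have htn : 0 ≤ Real.tan (κ / 2) :=
      Real.tan_nonneg_of_nonneg_of_le_pi_div_two (by linarith) (by linarith)
    have hβ : Real.arctan (Real.tan (κ' / 2)) = κ' / 2 :=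
      Real.arctan_tan (by linarith) (by linarith)
    have hmono : Real.arctan (r * Real.tan (κ / 2)) ≤ Real.arctan (M * Real.tan (κ / 2)) :=
      Real.arctan_strictMono.monotone (mul_le_mul_of_nonneg_right hrm.2 htn)
    have hML := arctan_mul_le M (Real.tan (κ / 2)) hM1 htn
    have hα : Real.arctan (Real.tan (κ / 2)) = κ / 2 :=
      Real.arctan_tan (by linarith) (by linarith)
    rw [htan] at hβ
    rw [hα] at hML
    nlinarith [hβ ▸ hmono, hML]
  · -- both in (π, 2π)
    set A : ℝ := Real.pi - κ / 2 with hAdef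
    set B : ℝ := Real.pi - κ' / 2 with hBdef
    clear_value A B
    have hA0 : 0 < A := by rw [hAdef]; linarith
    have hA2 : A < Real.pi / 2 := by rw [hAdef]; linarith
    have hB0 : 0 < B := by rw [hBdef]; linarith
    have hB2 : B < Real.pi / 2 := by rw [hBdef]; linarith
    have htA : Real.tan (κ / 2) = -Real.tan A := by
      have : κ / 2 = Real.pi - A := by rw [hAdef]; ring
      rw [this, Real.tan_pi_sub]
    have htB : Real.tan (κ' / 2) = -Real.tan B := by
      have : κ' / 2 = Real.pi - B := by rw [hBdef]; ring
      rw [this, Real.tan_pi_sub]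
    have htanAB : Real.tan B = r * Real.tan A := by
      rw [htA, htB] at htan
      linarith [htan]
    have htnA : 0 ≤ Real.tan A :=
      Real.tan_nonneg_of_nonneg_of_le_pi_div_two hA0.le hA2.le
    have hBB : Real.arctan (Real.tan B) = B := Real.arctan_tan (by linarith) hB2
    have hAA : Real.arctan (Real.tan A) = A := Real.arctan_tan (by linarith) hA2
    have hmono : Real.arctan (m * Real.tan A) ≤ Real.arctan (r * Real.tan A) :=
      Real.arctan_strictMono.monotone (mul_le_mul_of_nonneg_right hrm.1 htnA)
    have hmL := arctan_mul_ge m (Real.tan A) hm0.le hm1 htnA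
    rw [hAA] at hmL
    have hBmA : m * A ≤ B := by
      rw [← hBB, htanAB]
      exact hmL.trans hmono
    -- From m*M = 1: M + m ≥ 2
    have hMm2 : 2 ≤ M + m := by nlinarith [sq_nonneg (M - 1), hmM, hm0]
    -- goal: κ' ≤ κ * M, with κ' = 2π - 2B, κ = 2π - 2A
    have hκ'eq : κ' = 2 * Real.pi - 2 * B := by rw [hBdef]; ring
    have hκeq : κ = 2 * Real.pi - 2 * A := by rw [hAdef]; ring
    rw [hκ'eq, hκeq]
    have hmMle : m ≤ M := hrm.1.trans hrm.2
    have h1 : (M - m) * A ≤ (M - m) * (Real.pi / 2) :=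
      mul_le_mul_of_nonneg_left hA2.le (by linarith)
    have h2 : (M - m) * (Real.pi / 2) ≤ (M - 1) * Real.pi := by
      have := mul_nonneg (show (0:ℝ) ≤ M + m - 2 by linarith) hpi.le
      linarith [this]
    linarith [h1, h2, hBmA]
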